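/- Let Z be a type and m a positive natural number. Let u, v : Z → EuclideanSpace ℝ (Fin m), let λ λ' : Fin (m+1) → EuclideanSpace ℝ (Fin m), and let c : Fin m → ℝ. Suppose that for all z ∈ Z and all l : Fin m, ⟪u z, λ (l+1) − λ 0⟫ = ⟪v z, λ' (l+1) − λ' 0⟫ + c l, and suppose the m × m matrix L whose l-th column is λ (l+1) − λ 0 is invertible. Then there exist a linear map A : EuclideanSpace ℝ (Fin m) → EuclideanSpace ℝ (Fin m) and a vector d ∈ EuclideanSpace ℝ (Fin m) such that u z = A (v z) + d for all z ∈ Z. -/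

import Mathlib

open scoped RealInnerProductSpace Matrix

/-- Linear-system step of the identifiability proof: if
`⟪u z, λ(l+1) − λ 0⟫ = ⟪v z, λ'(l+1) − λ' 0⟫ + c l` for all `z` and `l`, and the
matrix whose `l`-th column is `λ(l+1) − λ 0` is invertible, then `u` is an affine
function of `v`: `u z = A (v z) + d`. -/
theorem affine_of_inner_system
    {Z : Type*} (m : ℕ) (hm : 0 < m)
    (u v : Z → EuclideanSpace ℝ (Fin m))
    (lam lam' : Fin (m + 1) → EuclideanSpace ℝ (Fin m))
    (c : Fin m → ℝ)
    (heq : ∀ z : Z, ∀ l : Fin m,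
      ⟪u z, lam l.succ - lam 0⟫ = ⟪v z, lam' l.succ - lam' 0⟫ + c l)
    (hL : IsUnit (Matrix.of fun (i l : Fin m) => (lam l.succ - lam 0) i)) :
    ∃ (A : EuclideanSpace ℝ (Fin m) →ₗ[ℝ] EuclideanSpace ℝ (Fin m))
      (d : EuclideanSpace ℝ (Fin m)),
      ∀ z : Z, u z = A (v z) + d := by
  set L : Matrix (Fin m) (Fin m) ℝ :=
    Matrix.of fun (i l : Fin m) => (lam l.succ - lam 0) i with hLdef
  set M : Matrix (Fin m) (Fin m) ℝ :=
    Matrix.of fun (i l : Fin m) => (lam' l.succ - lam' 0) i with hMdef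
  have hdet : IsUnit L.det := (Matrix.isUnit_iff_isUnit_det L).mp hL
  have hdetT : IsUnit Lᵀ.det := (Matrix.det_transpose L).symm ▸ hdet
  -- the system: Lᵀ *ᵥ u z = Mᵀ *ᵥ v z + c
  have hsys : ∀ z, Matrix.mulVec Lᵀ (u z) = Matrix.mulVec Mᵀ (v z) + c := by
    intro z
    funext l
    have h := heq z l
    simp only [PiLp.inner_apply, RCLike.inner_apply, starRingEnd_apply, star_trivial] at h
    simp only [Matrix.mulVec, dotProduct, Matrix.transpose_apply, Pi.add_apply,
      hLdef, hMdef, Matrix.of_apply]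
    calc ∑ i, (lam l.succ - lam 0) i * u z i
        = ∑ i, u z i * (lam l.succ - lam 0) i := by
          exact Finset.sum_congr rfl fun i _ => mul_comm _ _
      _ = ∑ i, v z i * (lam' l.succ - lam' 0) i + c l := by
          have e1 : ∑ i, u z i * (lam l.succ - lam 0) i = ∑ i, (lam l.succ - lam 0) i * u z i :=
            Finset.sum_congr rfl fun i _ => mul_comm _ _
          have e2 : ∑ i, v z i * (lam' l.succ - lam' 0) i = ∑ i, (lam' l.succ - lam' 0) i * v z i :=
            Finset.sum_congr rfl fun i _ => mul_comm _ _
          rw [e1, e2]; exact h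
      _ = (∑ i, (lam' l.succ - lam' 0) i * v z i) + c l := by
          congr 1; exact Finset.sum_congr rfl fun i _ => mul_comm _ _
  refine ⟨(Matrix.toEuclideanLin ((Lᵀ)⁻¹ * Mᵀ) :
      (EuclideanSpace ℝ (Fin m)) →ₗ[ℝ] (EuclideanSpace ℝ (Fin m))),
    (WithLp.toLp 2 (Matrix.mulVec (Lᵀ)⁻¹ c) : EuclideanSpace ℝ (Fin m)), fun z => ?_⟩
  apply WithLp.ofLp_injective 2
  show WithLp.ofLp (u z) = ((Lᵀ)⁻¹ * Mᵀ) *ᵥ WithLp.ofLp (v z) + (Lᵀ)⁻¹ *ᵥ c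
  have key : Matrix.mulVec (Lᵀ)⁻¹ (Matrix.mulVec Lᵀ (u z)) = u z := by
    rw [Matrix.mulVec_mulVec, Matrix.nonsing_inv_mul _ hdetT, Matrix.one_mulVec]
  have : Matrix.mulVec (Lᵀ)⁻¹ (Matrix.mulVec Mᵀ (v z) + c) = u z := by
    rw [← hsys z, key]
  rw [← this, Matrix.mulVec_add]
  show Matrix.mulVec (Lᵀ)⁻¹ (Matrix.mulVec Mᵀ (v z)) + Matrix.mulVec (Lᵀ)⁻¹ c
      = Matrix.toLin' ((Lᵀ)⁻¹ * Mᵀ) (v z) + Matrix.mulVec (Lᵀ)⁻¹ c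
  rw [Matrix.toLin'_apply, ← Matrix.mulVec_mulVec]
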